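/- Suppose σ is a regular uncountable cardinal, σ ≤ μ, μ^{<σ} = μ, and λ = μ⁺. Then there exist functions F₀, F₁ : λ × λ → λ and a function G, defined on the collection of subsets of λ of cardinality less than σ and taking values in μ, with the following property: whenever w_0, …, w_{k-1} is a finite sequence of subsets of λ, each of cardinality less than σ, each closed under F₀ and F₁ (meaning: for all α, β ∈ w_i, both F₀(α,β) ∈ w_i and F₁(α,β) ∈ w_i), and with G(w_0) = G(w_1) = ⋯ = G(w_{k-1}), then the closure P of {w_0, …, w_{k-1}} under pairwise intersections forms a tree under ⊆: for all u, v, w ∈ P, if u ⊆ w and v ⊆ w, then u ⊆ v or v ⊆ u. -/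

import Mathlib

open Cardinal

/-- if `σ` is regular uncountable, `σ ≤ μ`, `μ^{<σ} = μ` and `λ = μ⁺`
(represented by the type `Λ` of ordinals below the initial ordinal of `μ⁺`), then there are
`F₀ F₁ : λ × λ → λ` and a coloring `G` of the subsets of `λ` of size `< σ` by values in `μ`
(represented by the type `μ.ord.ToType` of cardinality `μ`), such that for any finite
monochromatic sequence of `F₀,F₁`-closed subsets of `λ` of size `< σ`, the closure of the
sequence under pairwise intersections is a tree under `⊆`. -/
theorem stmt3 (σ μ : Cardinal.{0}) (hreg : σ.IsRegular) (hunc : ℵ₀ < σ) (hσμ : σ ≤ μ)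
    (hμ : μ ^< σ = μ) :
    ∃ (F₀ F₁ : (Order.succ μ).ord.ToType × (Order.succ μ).ord.ToType →
        (Order.succ μ).ord.ToType)
      (G : Set (Order.succ μ).ord.ToType → μ.ord.ToType),
      ∀ (k : ℕ) (w : Fin k → Set (Order.succ μ).ord.ToType),
        (∀ i, #(w i) < σ) →
        (∀ i, ∀ α ∈ w i, ∀ β ∈ w i, F₀ (α, β) ∈ w i ∧ F₁ (α, β) ∈ w i) →
        (∀ i j, G (w i) = G (w j)) →
        ∀ u ∈ {u | ∃ t : Finset (Fin k), t.Nonempty ∧ u = ⋂ i ∈ t, w i},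
        ∀ v ∈ {u | ∃ t : Finset (Fin k), t.Nonempty ∧ u = ⋂ i ∈ t, w i},
        ∀ x ∈ {u | ∃ t : Finset (Fin k), t.Nonempty ∧ u = ⋂ i ∈ t, w i},
          u ⊆ x → v ⊆ x → u ⊆ v ∨ v ⊆ u := by
  classical
  have hμ0 : ℵ₀ ≤ μ := (hunc.le.trans hσμ)
  set Λt := (Order.succ μ).ord.ToType with hΛdef
  set Mt := μ.ord.ToType with hMdef
  haveI iw1 : IsWellOrder Λt ((· < ·) : Λt → Λt → Prop) := isWellOrder_lt
  haveI iw2 : IsWellOrder σ.ord.ToType ((· < ·) : σ.ord.ToType → σ.ord.ToType → Prop) :=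
    isWellOrder_lt
  have hM : #Mt = μ := mk_ord_toType μ
  have hΛ : #Λt = Order.succ μ := mk_ord_toType _
  obtain ⟨ι⟩ : Nonempty (Mt ↪ Λt) := by
    rw [← Cardinal.le_def, hM, hΛ]; exact (Order.le_succ μ)
  have he : ∀ β : Λt, Nonempty ({α : Λt // α < β} ↪ Mt) := by
    intro β
    rw [← Cardinal.le_def, hM]
    have h1 : #{α : Λt // α < β} = (Ordinal.typein (α := Λt) (· < ·) β).card :=
      (Ordinal.card_typein (r := ((· < ·) : Λt → Λt → Prop)) β).symm
    have h2 : Ordinal.typein (α := Λt) (· < ·) β < (Order.succ μ).ord := by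
      have := Ordinal.typein_lt_type ((· < ·) : Λt → Λt → Prop) β
      rwa [Ordinal.type_toType] at this
    rw [h1]
    exact Order.lt_succ_iff.mp ((Cardinal.lt_ord).mp h2)
  let e : ∀ β : Λt, {α : Λt // α < β} ↪ Mt := fun β => (he β).some
  let F₀ : Λt × Λt → Λt := fun p => if h : p.1 < p.2 then ι (e p.2 ⟨p.1, h⟩) else p.1
  let F₁ : Λt × Λt → Λt := fun p =>
    if h : ∃ a : {α : Λt // α < p.2}, ι (e p.2 a) = p.1 then (h.choose : {α : Λt // α < p.2}).1
    else p.1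
  obtain ⟨Φ⟩ : Nonempty ({t : Set Mt // #t < σ} ↪ Mt) := by
    rw [← Cardinal.le_def, hM]
    have key : #{t : Set Mt // #t < σ} ≤
        #(Σ c : σ.ord.ToType,
          {t : Set Mt // #t ≤ (Ordinal.typein (α := σ.ord.ToType) (· < ·) c).card}) := by
      apply Cardinal.mk_le_of_injective (f := fun t =>
        ⟨Ordinal.enum (α := σ.ord.ToType) (· < ·)
            ⟨(#(t.1)).ord, by rw [Ordinal.type_toType]; exact Set.mem_Iio.mpr (Cardinal.ord_lt_ord.mpr t.2)⟩,
          ⟨t.1, by erw [Ordinal.typein_enum]; simp⟩⟩)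
      intro t₁ t₂ h
      exact Subtype.ext (congrArg (fun x => (x.2.1 : Set Mt)) h)
    refine key.trans ?_
    rw [Cardinal.mk_sigma]
    refine le_trans (Cardinal.sum_le_sum _ (fun _ => μ) ?_) ?_
    · intro c
      have hb := Cardinal.mk_bounded_set_le Mt
        ((Ordinal.typein (α := σ.ord.ToType) (· < ·) c).card)
      rw [hM, max_eq_left hμ0] at hb
      refine hb.trans (le_trans (Cardinal.le_powerlt μ ?_) hμ.le)
      have h3 := Ordinal.typein_lt_type ((· < ·) : σ.ord.ToType → σ.ord.ToType → Prop) c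
      rw [Ordinal.type_toType] at h3
      exact (Cardinal.lt_ord).mp h3
    · rw [Cardinal.sum_const', mk_ord_toType]
      exact le_of_eq (Cardinal.mul_eq_right hμ0 hσμ hreg.pos.ne')
  let G : Set Λt → Mt := fun u =>
    if h : #(ι ⁻¹' u) < σ then Φ ⟨ι ⁻¹' u, h⟩
    else Φ ⟨∅, by rw [Cardinal.mk_emptyCollection]; exact hreg.pos⟩
  refine ⟨F₀, F₁, G, ?_⟩
  intro k w hsize hcl hmono
  have key : ∀ i j, ∀ γ ∈ w i, γ ∈ w j → ∀ δ ∈ w j, δ < γ → δ ∈ w i := by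
    intro i j γ hγi hγj δ hδj hδγ
    have hsm : ∀ l : Fin k, #(ι ⁻¹' (w l)) < σ := fun l =>
      lt_of_le_of_lt (Cardinal.mk_preimage_of_injective ι (w l) ι.injective) (hsize l)
    have htr : ι ⁻¹' (w i) = ι ⁻¹' (w j) := by
      have hm := hmono i j
      simp only [G, dif_pos (hsm i), dif_pos (hsm j)] at hm
      exact Subtype.ext_iff.mp (Φ.injective hm)
    have hζj : ι (e γ ⟨δ, hδγ⟩) ∈ w j := by
      have h0 := (hcl j δ hδj γ hγj).1
      simpa only [F₀, dif_pos hδγ] using h0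
    have hζi : ι (e γ ⟨δ, hδγ⟩) ∈ w i := by
      have hmem : e γ ⟨δ, hδγ⟩ ∈ ι ⁻¹' (w j) := hζj
      rw [← htr] at hmem; exact hmem
    have h1 := (hcl i _ hζi γ hγi).2
    have hex : ∃ a : {α : Λt // α < γ}, ι (e γ a) = ι (e γ ⟨δ, hδγ⟩) := ⟨⟨δ, hδγ⟩, rfl⟩
    have hF₁ : F₁ (ι (e γ ⟨δ, hδγ⟩), γ) = δ := by
      simp only [F₁, dif_pos hex]
      have hcs := hex.choose_spec
      have h2 : hex.choose = ⟨δ, hδγ⟩ := (e γ).injective (ι.injective hcs)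
      rw [h2]
    rwa [hF₁] at h1
  rintro u ⟨t, ht, rfl⟩ v ⟨s, hs, rfl⟩ x ⟨r, hr, rfl⟩ hux hvx
  obtain ⟨j, hj⟩ := hr
  have initial : ∀ (t' : Finset (Fin k)),
      (⋂ i ∈ t', w i) ⊆ (⋂ i ∈ r, w i) →
      ∀ γ ∈ (⋂ i ∈ t', w i), ∀ δ ∈ (⋂ i ∈ r, w i), δ < γ → δ ∈ (⋂ i ∈ t', w i) := by
    intro t' hsub γ hγ δ hδ hδγ
    have hγx := hsub hγ
    simp only [Set.mem_iInter] at hγ hδ hγx ⊢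
    intro i hi
    exact key i j γ (hγ i hi) (hγx j hj) δ (hδ j hj) hδγ
  have hu := initial t hux
  have hv := initial s hvx
  by_contra hcon
  push_neg at hcon
  obtain ⟨a, hau, hav⟩ := Set.not_subset.mp hcon.1
  obtain ⟨b, hbv, hbu⟩ := Set.not_subset.mp hcon.2
  rcases lt_trichotomy a b with h | h | h
  · exact hav (hv b hbv a (hux hau) h)
  · exact hav (h ▸ hbv)
  · exact hbu (hu a hau b (hvx hbv) h)
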